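/- Let S be a symmetric N²×N² real matrix that commutes with each of E⊗I, I⊗E, R⊗I and I⊗R, and let h ∈ ℝ^{N²}. Define the vector field f(q) = J_E(q, S(q−h)). Then f is diagonal-free: for every index i, every q ∈ ℝ^{N²} and every t ∈ ℝ, the i-th component satisfies (f(q + t e_i))_i = (f(q))_i, i.e. the i-th component of f does not depend on the i-th variable. -/

import Mathlib

open Matrix
open scoped Kronecker

noncomputable section

/-- The `N×N` cyclic shift matrix: `E i j = 1` iff `j ≡ i+1 (mod N)`. -/
def shiftE (N : ℕ) : Matrix (Fin N) (Fin N) ℝ :=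
  Matrix.of fun i j => if ((i : ℕ) + 1) % N = (j : ℕ) then 1 else 0

/-- The grid spacing `δ = 2π/N`. -/
def gridDelta (N : ℕ) : ℝ := 2 * Real.pi / N

/-- The central divided-difference matrix `D = (E - Eᵀ)/(2δ)`. -/
def Dmat (N : ℕ) : Matrix (Fin N) (Fin N) ℝ :=
  (2 * gridDelta N)⁻¹ • (shiftE N - (shiftE N)ᵀ)

/-- `D_x = I ⊗ D`. -/
def Dx (N : ℕ) : Matrix (Fin N × Fin N) (Fin N × Fin N) ℝ :=
  (1 : Matrix (Fin N) (Fin N) ℝ) ⊗ₖ Dmat N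

/-- `D_y = D ⊗ I`. -/
def Dy (N : ℕ) : Matrix (Fin N × Fin N) (Fin N × Fin N) ℝ :=
  Dmat N ⊗ₖ (1 : Matrix (Fin N) (Fin N) ℝ)

/-- `J_0(q, ψ) = (D_x q)∗(D_y ψ) − (D_y q)∗(D_x ψ)` (componentwise products). -/
def J0 (N : ℕ) (q ψ : Fin N × Fin N → ℝ) : Fin N × Fin N → ℝ :=
  (Dx N).mulVec q * (Dy N).mulVec ψ - (Dy N).mulVec q * (Dx N).mulVec ψ

/-- `J_E(q, ψ) = D_x(q ∗ D_y ψ) − D_y(q ∗ D_x ψ)`. -/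
def JE (N : ℕ) (q ψ : Fin N × Fin N → ℝ) : Fin N × Fin N → ℝ :=
  (Dx N).mulVec (q * (Dy N).mulVec ψ) - (Dy N).mulVec (q * (Dx N).mulVec ψ)

/-- `J_Z(q, ψ) = D_y((D_x q) ∗ ψ) − D_x((D_y q) ∗ ψ)`. -/
def JZ (N : ℕ) (q ψ : Fin N × Fin N → ℝ) : Fin N × Fin N → ℝ :=
  (Dy N).mulVec ((Dx N).mulVec q * ψ) - (Dx N).mulVec ((Dy N).mulVec q * ψ)

/-- The Arakawa energy–enstrophy bracket `J_EZ = (J_0 + J_E + J_Z)/3`. -/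
def JEZ (N : ℕ) (q ψ : Fin N × Fin N → ℝ) : Fin N × Fin N → ℝ :=
  (3 : ℝ)⁻¹ • (J0 N q ψ + JE N q ψ + JZ N q ψ)

/-- The `N×N` flip permutation matrix: `R j k = 1` iff `j + k ≡ 0 (mod N)`. -/
def flipR (N : ℕ) : Matrix (Fin N) (Fin N) ℝ :=
  Matrix.of fun j k => if ((j : ℕ) + (k : ℕ)) % N = 0 then 1 else 0

open Fin.CommRing

section aux
variable {N : ℕ} [NeZero N]

lemma fin_val_one (hN : 3 ≤ N) : ((1 : Fin N) : ℕ) = 1 := by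
  rw [show (1 : Fin N) = ((1:ℕ) : Fin N) by norm_num, Fin.val_cast_of_lt (by omega)]

lemma fin_one_ne_zero (hN : 3 ≤ N) : (1 : Fin N) ≠ 0 := by
  intro h0
  have := congrArg Fin.val h0
  rw [fin_val_one hN] at this
  simp at this

lemma shiftE_apply (hN : 3 ≤ N) (i j : Fin N) :
    shiftE N i j = if j = i + 1 then 1 else 0 := by
  simp only [shiftE, Matrix.of_apply]
  congr 1
  rw [eq_iff_iff, Fin.ext_iff, Fin.val_add, fin_val_one hN, eq_comm]

lemma flipR_apply (hN : 3 ≤ N) (i j : Fin N) :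
    flipR N i j = if j = -i then 1 else 0 := by
  simp only [flipR, Matrix.of_apply]
  congr 1
  rw [eq_iff_iff, eq_neg_iff_add_eq_zero, ← Fin.val_add, add_comm j i]
  constructor
  · intro hh; exact Fin.ext (by simpa using hh)
  · intro hh; rw [hh]; simp [Fin.val_add]

lemma Dmat_apply (hN : 3 ≤ N) (a c : Fin N) :
    Dmat N a c = (2 * gridDelta N)⁻¹ *
      ((if c = a + 1 then 1 else 0) - (if c = a - 1 then 1 else 0)) := by
  simp only [Dmat, Matrix.smul_apply, Matrix.sub_apply, Matrix.transpose_apply,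
    shiftE_apply hN, smul_eq_mul]
  congr 2
  congr 1
  rw [eq_iff_iff]
  constructor
  · intro hh; rw [hh]; rw [add_sub_cancel_right]
  · intro hh; rw [hh, sub_add_cancel]

lemma Dmat_diag (hN : 3 ≤ N) (a : Fin N) : Dmat N a a = 0 := by
  have h1 : a ≠ a + 1 := by
    intro hh
    exact fin_one_ne_zero hN (left_eq_add.mp hh)
  have h2 : a ≠ a - 1 := by
    intro hh
    have := congrArg (· + 1) hh
    simp only [sub_add_cancel] at this
    exact h1 this.symm
  rw [Dmat_apply hN, if_neg h1, if_neg h2]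
  ring

end aux
section aux2
variable {N : ℕ} [NeZero N]

lemma Dy_mulVec (hN : 3 ≤ N) (u : Fin N × Fin N → ℝ) (j : Fin N × Fin N) :
    (Dy N).mulVec u j
      = (2 * gridDelta N)⁻¹ * (u (j.1 + 1, j.2) - u (j.1 - 1, j.2)) := by
  simp only [Matrix.mulVec, dotProduct, Fintype.sum_prod_type, Dy,
    Matrix.kroneckerMap_apply, Matrix.one_apply, Dmat_apply hN, mul_sub, sub_mul,
    mul_ite, mul_one, mul_zero, ite_mul, zero_mul, one_mul, smul_eq_mul,
    Finset.sum_sub_distrib, Finset.sum_ite_eq, Finset.sum_ite_eq',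
    Finset.mem_univ, if_true]

lemma Dx_mulVec (hN : 3 ≤ N) (u : Fin N × Fin N → ℝ) (j : Fin N × Fin N) :
    (Dx N).mulVec u j
      = (2 * gridDelta N)⁻¹ * (u (j.1, j.2 + 1) - u (j.1, j.2 - 1)) := by
  simp only [Matrix.mulVec, dotProduct, Fintype.sum_prod_type, Dx,
    Matrix.kroneckerMap_apply, Matrix.one_apply, Dmat_apply hN, mul_sub, sub_mul,
    mul_ite, mul_one, mul_zero, ite_mul, zero_mul, one_mul, smul_eq_mul,
    Finset.sum_sub_distrib, Finset.sum_ite_eq, Finset.sum_ite_eq',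
    Finset.mem_univ, if_true]

end aux2
section aux3
variable {N : ℕ} [NeZero N] (S : Matrix (Fin N × Fin N) (Fin N × Fin N) ℝ)

lemma flipR_apply' (hN : 3 ≤ N) (i j : Fin N) :
    flipR N i j = if i = -j then 1 else 0 := by
  rw [flipR_apply hN]
  congr 1
  rw [eq_iff_iff, eq_neg_iff_add_eq_zero, eq_neg_iff_add_eq_zero, add_comm]

lemma S_shift1 (hN : 3 ≤ N)
    (hS1 : S * (shiftE N ⊗ₖ (1 : Matrix (Fin N) (Fin N) ℝ)) =
      (shiftE N ⊗ₖ (1 : Matrix (Fin N) (Fin N) ℝ)) * S)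
    (a b c d : Fin N) : S (a + 1, b) (c + 1, d) = S (a, b) (c, d) := by
  have := congrFun (congrFun hS1 (a, b)) (c + 1, d)
  simp only [Matrix.mul_apply, Fintype.sum_prod_type, Matrix.kroneckerMap_apply,
    Matrix.one_apply, shiftE_apply hN, add_left_inj, mul_ite, mul_one, mul_zero,
    ite_mul, zero_mul, one_mul, Finset.sum_ite_eq, Finset.sum_ite_eq',
    Finset.mem_univ, if_true] at this
  exact this.symm

lemma S_shift2 (hN : 3 ≤ N)
    (hS2 : S * ((1 : Matrix (Fin N) (Fin N) ℝ) ⊗ₖ shiftE N) =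
      ((1 : Matrix (Fin N) (Fin N) ℝ) ⊗ₖ shiftE N) * S)
    (a b c d : Fin N) : S (a, b + 1) (c, d + 1) = S (a, b) (c, d) := by
  have := congrFun (congrFun hS2 (a, b)) (c, d + 1)
  simp only [Matrix.mul_apply, Fintype.sum_prod_type, Matrix.kroneckerMap_apply,
    Matrix.one_apply, shiftE_apply hN, add_left_inj, mul_ite, mul_one, mul_zero,
    ite_mul, zero_mul, one_mul, Finset.sum_ite_eq, Finset.sum_ite_eq',
    Finset.mem_univ, if_true] at this
  exact this.symm

lemma S_flip1 (hN : 3 ≤ N)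
    (hS3 : S * (flipR N ⊗ₖ (1 : Matrix (Fin N) (Fin N) ℝ)) =
      (flipR N ⊗ₖ (1 : Matrix (Fin N) (Fin N) ℝ)) * S)
    (a b c d : Fin N) : S (a, b) (c, d) = S (-a, b) (-c, d) := by
  have := congrFun (congrFun hS3 (a, b)) (-c, d)
  simp only [Matrix.mul_apply, Fintype.sum_prod_type, Matrix.kroneckerMap_apply,
    Matrix.one_apply, flipR_apply hN, flipR_apply' hN, neg_neg, neg_inj,
    mul_ite, mul_one, mul_zero,
    ite_mul, zero_mul, one_mul, Finset.sum_ite_eq, Finset.sum_ite_eq',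
    Finset.mem_univ, if_true] at this
  exact this

lemma S_flip2 (hN : 3 ≤ N)
    (hS4 : S * ((1 : Matrix (Fin N) (Fin N) ℝ) ⊗ₖ flipR N) =
      ((1 : Matrix (Fin N) (Fin N) ℝ) ⊗ₖ flipR N) * S)
    (a b c d : Fin N) : S (a, b) (c, d) = S (a, -b) (c, -d) := by
  have := congrFun (congrFun hS4 (a, b)) (c, -d)
  simp only [Matrix.mul_apply, Fintype.sum_prod_type, Matrix.kroneckerMap_apply,
    Matrix.one_apply, flipR_apply hN, flipR_apply' hN, neg_neg, neg_inj,
    mul_ite, mul_one, mul_zero,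
    ite_mul, zero_mul, one_mul, Finset.sum_ite_eq, Finset.sum_ite_eq',
    Finset.mem_univ, if_true] at this
  exact this

end aux3
section aux4
variable {N : ℕ} [NeZero N] (S : Matrix (Fin N × Fin N) (Fin N × Fin N) ℝ)

lemma S_shiftN1 (hN : 3 ≤ N)
    (hS1 : S * (shiftE N ⊗ₖ (1 : Matrix (Fin N) (Fin N) ℝ)) =
      (shiftE N ⊗ₖ (1 : Matrix (Fin N) (Fin N) ℝ)) * S)
    (k : ℕ) (a b c d : Fin N) :
    S (a + (k : Fin N), b) (c + (k : Fin N), d) = S (a, b) (c, d) := by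
  induction k with
  | zero => simp
  | succ n ih =>
    have hc : ((n + 1 : ℕ) : Fin N) = (n : Fin N) + 1 := by push_cast; ring
    rw [hc, ← add_assoc, ← add_assoc, S_shift1 S hN hS1, ih]

lemma S_shiftN2 (hN : 3 ≤ N)
    (hS2 : S * ((1 : Matrix (Fin N) (Fin N) ℝ) ⊗ₖ shiftE N) =
      ((1 : Matrix (Fin N) (Fin N) ℝ) ⊗ₖ shiftE N) * S)
    (k : ℕ) (a b c d : Fin N) :
    S (a, b + (k : Fin N)) (c, d + (k : Fin N)) = S (a, b) (c, d) := by
  induction k with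
  | zero => simp
  | succ n ih =>
    have hc : ((n + 1 : ℕ) : Fin N) = (n : Fin N) + 1 := by push_cast; ring
    rw [hc, ← add_assoc, ← add_assoc, S_shift2 S hN hS2, ih]

lemma S_key1 (hN : 3 ≤ N)
    (hS1 : S * (shiftE N ⊗ₖ (1 : Matrix (Fin N) (Fin N) ℝ)) =
      (shiftE N ⊗ₖ (1 : Matrix (Fin N) (Fin N) ℝ)) * S)
    (hS3 : S * (flipR N ⊗ₖ (1 : Matrix (Fin N) (Fin N) ℝ)) =
      (flipR N ⊗ₖ (1 : Matrix (Fin N) (Fin N) ℝ)) * S)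
    (a v w : Fin N) : S (a + 1, v) (a, w) = S (a - 1, v) (a, w) := by
  have hcast : ((2 * a.val : ℕ) : Fin N) = 2 * a := by
    push_cast [Fin.cast_val_eq_self]
    rfl
  have h1 : S (a + 1, v) (a, w) = S (-(a + 1), v) (-a, w) :=
    S_flip1 S hN hS3 (a + 1) v a w
  have h2 : S (-(a + 1) + ((2 * a.val : ℕ) : Fin N), v)
      (-a + ((2 * a.val : ℕ) : Fin N), w) = S (-(a + 1), v) (-a, w) :=
    S_shiftN1 S hN hS1 (2 * a.val) (-(a+1)) v (-a) w
  rw [hcast] at h2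
  have e1 : -(a + 1) + 2 * a = a - 1 := by ring
  have e2 : -a + 2 * a = a := by ring
  rw [e1, e2] at h2
  rw [h1, ← h2]

lemma S_key2 (hN : 3 ≤ N)
    (hS2 : S * ((1 : Matrix (Fin N) (Fin N) ℝ) ⊗ₖ shiftE N) =
      ((1 : Matrix (Fin N) (Fin N) ℝ) ⊗ₖ shiftE N) * S)
    (hS4 : S * ((1 : Matrix (Fin N) (Fin N) ℝ) ⊗ₖ flipR N) =
      ((1 : Matrix (Fin N) (Fin N) ℝ) ⊗ₖ flipR N) * S)
    (b v w : Fin N) : S (v, b + 1) (w, b) = S (v, b - 1) (w, b) := by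
  have hcast : ((2 * b.val : ℕ) : Fin N) = 2 * b := by
    push_cast [Fin.cast_val_eq_self]
    rfl
  have h1 : S (v, b + 1) (w, b) = S (v, -(b + 1)) (w, -b) :=
    S_flip2 S hN hS4 v (b + 1) w b
  have h2 : S (v, -(b + 1) + ((2 * b.val : ℕ) : Fin N))
      (w, -b + ((2 * b.val : ℕ) : Fin N)) = S (v, -(b + 1)) (w, -b) :=
    S_shiftN2 S hN hS2 (2 * b.val) v (-(b+1)) w (-b)
  rw [hcast] at h2
  have e1 : -(b + 1) + 2 * b = b - 1 := by ring
  have e2 : -b + 2 * b = b := by ring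
  rw [e1, e2] at h2
  rw [h1, ← h2]

end aux4

/-- for a symmetric `S` commuting with `E⊗I`, `I⊗E`, `R⊗I` and
`I⊗R`, the vector field `f(q) = J_E(q, S(q−h))` is diagonal-free: its `i`-th
component does not depend on the `i`-th variable. -/
theorem JE_diagonal_free (N : ℕ) (hN : 3 ≤ N)
    (S : Matrix (Fin N × Fin N) (Fin N × Fin N) ℝ)
    (hSsymm : Sᵀ = S)
    (hS1 : S * (shiftE N ⊗ₖ (1 : Matrix (Fin N) (Fin N) ℝ)) =
      (shiftE N ⊗ₖ (1 : Matrix (Fin N) (Fin N) ℝ)) * S)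
    (hS2 : S * ((1 : Matrix (Fin N) (Fin N) ℝ) ⊗ₖ shiftE N) =
      ((1 : Matrix (Fin N) (Fin N) ℝ) ⊗ₖ shiftE N) * S)
    (hS3 : S * (flipR N ⊗ₖ (1 : Matrix (Fin N) (Fin N) ℝ)) =
      (flipR N ⊗ₖ (1 : Matrix (Fin N) (Fin N) ℝ)) * S)
    (hS4 : S * ((1 : Matrix (Fin N) (Fin N) ℝ) ⊗ₖ flipR N) =
      ((1 : Matrix (Fin N) (Fin N) ℝ) ⊗ₖ flipR N) * S)
    (h : Fin N × Fin N → ℝ) :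
    ∀ (i : Fin N × Fin N) (q : Fin N × Fin N → ℝ) (t : ℝ),
      JE N (q + t • (Pi.single i 1 : Fin N × Fin N → ℝ))
        (S.mulVec (q + t • (Pi.single i 1 : Fin N × Fin N → ℝ) - h)) i
      = JE N q (S.mulVec (q - h)) i := by
  haveI : NeZero N := ⟨by omega⟩
  intro i q t
  obtain ⟨a, b⟩ := i
  have hplus : ∀ x : Fin N, ¬(x + 1 = x) := by
    intro x hh
    exact fin_one_ne_zero hN (add_eq_left.mp hh)
  have hminus : ∀ x : Fin N, ¬(x - 1 = x) := by
    intro x hh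
    have : x - 1 + 1 = x + 1 := by rw [hh]
    rw [sub_add_cancel] at this
    exact hplus x this.symm
  have hcol : S.mulVec (Pi.single (a, b) 1 : Fin N × Fin N → ℝ)
      = fun k => S k (a, b) := by
    funext k
    simp [Matrix.mulVec, dotProduct, Pi.single_apply, mul_ite, mul_one,
      mul_zero, Finset.sum_ite_eq, Finset.sum_ite_eq']
  have hψ : S.mulVec (q + t • (Pi.single (a, b) 1 : Fin N × Fin N → ℝ) - h)
      = S.mulVec (q - h) + t • fun k => S k (a, b) := by
    rw [add_sub_right_comm, Matrix.mulVec_add, Matrix.mulVec_smul, hcol]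
  rw [hψ]
  have k1 := S_key1 S hN hS1 hS3 a (b + 1) b
  have k2 := S_key1 S hN hS1 hS3 a (b - 1) b
  have k3 := S_key2 S hN hS2 hS4 b (a + 1) a
  have k4 := S_key2 S hN hS2 hS4 b (a - 1) a
  simp only [JE, Pi.sub_apply, Dx_mulVec hN, Dy_mulVec hN, Pi.mul_apply,
    Pi.add_apply, Pi.smul_apply, smul_eq_mul, Pi.single_apply, Prod.mk.injEq,
    hplus, hminus, and_false, false_and, and_true, if_false, mul_zero, add_zero,
    eq_self_iff_true, true_and]
  linear_combination (t * ((2 * gridDelta N)⁻¹)^2 * q (a, b + 1)) * k1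
    - (t * ((2 * gridDelta N)⁻¹)^2 * q (a, b - 1)) * k2
    - (t * ((2 * gridDelta N)⁻¹)^2 * q (a + 1, b)) * k3
    + (t * ((2 * gridDelta N)⁻¹)^2 * q (a - 1, b)) * k4
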